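/- There exists a no-signaling binary strategy P(x,y|a,b) that admits an active-common-randomness factorization P(x,y|a,b) = Σ_w P(w|a,b)·f(x|a,w)·g(y|b,w) with P(w|a,b) genuinely depending on (a,b), but admits no passive factorization P(x,y|a,b) = Σ_w μ(w)·f(x|a,w)·g(y|b,w) with μ independent of (a,b). -/

import Mathlib

open Finset

noncomputable def Pex : Fin 2 → Fin 2 → Fin 2 → Fin 2 → ℝ :=
  ![![![![1/2, 0], ![1/3, 1/6]], ![![1/2, 0], ![0, 1/2]]],
    ![![![1/2, 0], ![1/3, 1/6]], ![![0, 1/2], ![1/2, 0]]]]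

noncomputable def νex : Fin 2 → Fin 2 → Fin 4 → ℝ :=
  ![![![1/2, 0, 0, 1/2], ![1/2, 0, 0, 1/2]],
    ![![1/2, 0, 0, 1/2], ![0, 1/2, 1/2, 0]]]

noncomputable def fex : Fin 2 → Fin 4 → Fin 2 → ℝ :=
  fun _ => ![![1, 0], ![1, 0], ![0, 1], ![0, 1]]

noncomputable def gex : Fin 2 → Fin 4 → Fin 2 → ℝ :=
  ![![![1, 0], ![2/3, 1/3], ![1, 0], ![2/3, 1/3]],
    ![![1, 0], ![0, 1], ![1, 0], ![0, 1]]]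

/-- There exists a no-signaling binary strategy that admits an
active-common-randomness factorization (with the common randomness genuinely
depending on `(a,b)`) but no passive factorization. -/
theorem statement11 :
    ∃ P : Fin 2 → Fin 2 → Fin 2 → Fin 2 → ℝ,
      (∀ a b x y, 0 ≤ P a b x y) ∧
      (∀ a b : Fin 2, ∑ x, ∑ y, P a b x y = 1) ∧
      (∀ a x b b' : Fin 2, ∑ y, P a b x y = ∑ y, P a b' x y) ∧
      (∀ b y a a' : Fin 2, ∑ x, P a b x y = ∑ x, P a' b x y) ∧
      (∃ (n : ℕ) (ν : Fin 2 → Fin 2 → Fin n → ℝ)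
          (f : Fin 2 → Fin n → Fin 2 → ℝ) (g : Fin 2 → Fin n → Fin 2 → ℝ),
          (∀ a b w, 0 ≤ ν a b w) ∧ (∀ a b : Fin 2, ∑ w, ν a b w = 1) ∧
          (∀ a w x, 0 ≤ f a w x) ∧ (∀ a w, ∑ x, f a w x = 1) ∧
          (∀ b w y, 0 ≤ g b w y) ∧ (∀ b w, ∑ y, g b w y = 1) ∧
          (∀ a b x y, P a b x y = ∑ w, ν a b w * f a w x * g b w y) ∧
          (∃ a b a' b' w, ν a b w ≠ ν a' b' w)) ∧
      ¬ ∃ (n : ℕ) (μ : Fin n → ℝ)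
          (f : Fin 2 → Fin n → Fin 2 → ℝ) (g : Fin 2 → Fin n → Fin 2 → ℝ),
          (∀ w, 0 ≤ μ w) ∧ (∑ w, μ w = 1) ∧
          (∀ a w x, 0 ≤ f a w x) ∧ (∀ a w, ∑ x, f a w x = 1) ∧
          (∀ b w y, 0 ≤ g b w y) ∧ (∀ b w, ∑ y, g b w y = 1) ∧
          (∀ a b x y, P a b x y = ∑ w, μ w * f a w x * g b w y) := by
  refine ⟨Pex, ?_, ?_, ?_, ?_, ?_, ?_⟩
  · intro a b x y
    fin_cases a <;> fin_cases b <;> fin_cases x <;> fin_cases y <;> norm_num [Pex]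
  · intro a b
    fin_cases a <;> fin_cases b <;> norm_num [Pex, Fin.sum_univ_two]
  · intro a x b b'
    fin_cases a <;> fin_cases x <;> fin_cases b <;> fin_cases b' <;>
      norm_num [Pex, Fin.sum_univ_two]
  · intro b y a a'
    fin_cases b <;> fin_cases y <;> fin_cases a <;> fin_cases a' <;>
      norm_num [Pex, Fin.sum_univ_two]
  · refine ⟨4, νex, fex, gex, ?_, ?_, ?_, ?_, ?_, ?_, ?_, ?_⟩
    · intro a b w
      fin_cases a <;> fin_cases b <;> fin_cases w <;> norm_num [νex]
    · intro a b
      fin_cases a <;> fin_cases b <;> norm_num [νex, Fin.sum_univ_succ]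
    · intro a w x
      fin_cases a <;> fin_cases w <;> fin_cases x <;> norm_num [fex]
    · intro a w
      fin_cases a <;> fin_cases w <;> norm_num [fex, Fin.sum_univ_two]
    · intro b w y
      fin_cases b <;> fin_cases w <;> fin_cases y <;> norm_num [gex]
    · intro b w
      fin_cases b <;> fin_cases w <;> norm_num [gex, Fin.sum_univ_two]
    · intro a b x y
      fin_cases a <;> fin_cases b <;> fin_cases x <;> fin_cases y <;>
        norm_num [Pex, νex, fex, gex, Fin.sum_univ_succ, Matrix.vecHead, Matrix.vecTail]
    · exact ⟨0, 0, 1, 1, 0, by norm_num [νex]⟩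
  · rintro ⟨n, μ, f, g, hμ0, hμ1, hf0, hf1, hg0, hg1, hfac⟩
    have hterm : ∀ (a b x y : Fin 2), Pex a b x y = 0 →
        ∀ w, μ w * f a w x * g b w y = 0 := by
      intro a b x y h0 w
      have hs : ∑ w, μ w * f a w x * g b w y = 0 := (hfac a b x y).symm.trans h0
      exact (Finset.sum_eq_zero_iff_of_nonneg (fun w _ =>
        mul_nonneg (mul_nonneg (hμ0 w) (hf0 a w x)) (hg0 b w y))).mp hs w (mem_univ w)
    have h16 : ∑ w, μ w * f 0 w 1 * g 0 w 1 = 1/6 := by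
      have := hfac 0 0 1 1
      rw [← this]; norm_num [Pex]
    have hzero : ∀ w, μ w * f 0 w 1 * g 0 w 1 = 0 := by
      intro w
      rcases eq_or_lt_of_le (hμ0 w) with h | hμ
      · rw [← h]; ring
      have hB := hterm 0 1 1 0 (by norm_num [Pex]) w
      rcases mul_eq_zero.mp hB with h' | hs0
      · rcases mul_eq_zero.mp h' with h'' | hp1
        · exact absurd h'' hμ.ne'
        · rw [hp1]; ring
      · -- g 1 w 0 = 0, so g 1 w 1 = 1
        have hg11 : g 1 w 1 = 1 := by
          have := hg1 1 w; rw [Fin.sum_univ_two, hs0] at this; linarith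
        have hD := hterm 1 1 1 1 (by norm_num [Pex]) w
        have hq1 : f 1 w 1 = 0 := by
          rcases mul_eq_zero.mp hD with h' | h'
          · rcases mul_eq_zero.mp h' with h'' | h''
            · exact absurd h'' hμ.ne'
            · exact h''
          · rw [hg11] at h'; norm_num at h'
        have hq0 : f 1 w 0 = 1 := by
          have := hf1 1 w; rw [Fin.sum_univ_two, hq1] at this; linarith
        have hF := hterm 1 0 0 1 (by norm_num [Pex]) w
        rcases mul_eq_zero.mp hF with h' | hr1
        · rcases mul_eq_zero.mp h' with h'' | h''
          · exact absurd h'' hμ.ne'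
          · rw [hq0] at h''; norm_num at h''
        · rw [hr1]; ring
    have hcon : (1:ℝ)/6 = 0 := by
      rw [← h16, Finset.sum_eq_zero (fun w _ => hzero w)]
    norm_num at hcon
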